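/- arXiv:2107.03877 — 8 statements merged into one kernel-verified Lean document; each statement's English description precedes it below -/
import Mathlib

section
/- Let E be a finite-dimensional real inner product space, K ⊆ E a nonempty closed cone, v ∈ E, and u a projection of v onto K. Then ‖u‖ = max(0, sup{⟪v, z⟫ : z ∈ K, ‖z‖ = 1}) (with the convention sup ∅ = 0) and ‖u‖² = ⟪v, u⟫. In particular, any two projections of v onto K have the same norm. -/
theorem aux0 {E : Type*} [NormedAddCommGroup E] [InnerProductSpace ℝ E]
    (K : Set E)
    (hcone : ∀ u ∈ K, ∀ α : ℝ, 0 < α → α • u ∈ K)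
    (v u : E) (huK : u ∈ K) (hproj : ∀ z ∈ K, ‖v - u‖ ≤ ‖v - z‖) :
    ‖u‖ ^ 2 = (inner ℝ v u : ℝ) ∧
    ‖u‖ = max 0 (sSup {t : ℝ | ∃ z ∈ K, ‖z‖ = 1 ∧ (inner ℝ v z : ℝ) = t}) := by
  have key : ∀ α : ℝ, 0 < α → ∀ z ∈ K,
      ‖v‖^2 - 2*(inner ℝ v u : ℝ) + ‖u‖^2 ≤ ‖v‖^2 - 2*(α*(inner ℝ v z : ℝ)) + α^2*‖z‖^2 := by
    intro α hα z hz
    have h := hproj (α • z) (hcone z hz α hα)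
    have h2 : ‖v - u‖^2 ≤ ‖v - α•z‖^2 := pow_le_pow_left₀ (norm_nonneg _) h 2
    rw [norm_sub_sq_real, norm_sub_sq_real] at h2
    have hn : ‖α • z‖^2 = α^2 * ‖z‖^2 := by
      rw [norm_smul, mul_pow, Real.norm_eq_abs, sq_abs]
    rw [real_inner_smul_right, hn] at h2
    linarith
  have hIN : (inner ℝ v u : ℝ) = ‖u‖^2 := by
    rcases eq_or_ne u 0 with rfl | hu
    · simp
    · have hN : 0 < ‖u‖^2 := pow_pos (norm_pos_iff.mpr hu) 2
      set I := (inner ℝ v u : ℝ) with hIdef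
      rcases le_or_gt I 0 with hI | hI
      · have h := key (1/2) (by norm_num) u huK
        nlinarith
      · have hc : I / ‖u‖^2 * ‖u‖^2 = I := div_mul_cancel₀ _ (ne_of_gt hN)
        have h := key (I / ‖u‖^2) (by positivity) u huK
        have h1 : I ≤ ‖u‖^2 := by nlinarith [sq_nonneg (I - ‖u‖^2)]
        have h2 : ‖u‖^2 ≤ I := by nlinarith [sq_nonneg (I - ‖u‖^2)]
        linarith
  have hbound : ∀ z ∈ K, ‖z‖ = 1 → (inner ℝ v z : ℝ) ≤ ‖u‖ := by
    intro z hz hz1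
    rcases eq_or_ne u 0 with rfl | hu
    · simp only [norm_zero]
      refine le_of_forall_pos_le_add ?_
      intro ε hε
      have h := key ε hε z hz
      rw [hz1] at h
      simp only [inner_zero_right, norm_zero] at h
      nlinarith
    · have hα : 0 < ‖u‖ := norm_pos_iff.mpr hu
      have h := key ‖u‖ hα z hz
      rw [hz1] at h
      nlinarith
  set S := {t : ℝ | ∃ z ∈ K, ‖z‖ = 1 ∧ (inner ℝ v z : ℝ) = t} with hS
  have hub : ∀ t ∈ S, t ≤ ‖u‖ := by rintro t ⟨z, hz, h1, rfl⟩; exact hbound z hz h1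
  have hbdd : BddAbove S := ⟨‖u‖, hub⟩
  have hle : max 0 (sSup S) ≤ ‖u‖ := max_le (norm_nonneg u) (Real.sSup_le hub (norm_nonneg u))
  have hge : ‖u‖ ≤ max 0 (sSup S) := by
    rcases eq_or_ne u 0 with rfl | hu
    · simp
    · have hα : 0 < ‖u‖ := norm_pos_iff.mpr hu
      have hmem : ‖u‖ ∈ S := by
        refine ⟨‖u‖⁻¹ • u, hcone u huK _ (by positivity), ?_, ?_⟩
        · rw [norm_smul, norm_inv, norm_norm]
          field_simp
        · rw [real_inner_smul_right, hIN]
          field_simp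
      exact le_trans (le_csSup hbdd hmem) (le_max_right _ _)
  exact ⟨hIN.symm, le_antisymm hge hle⟩


/-- Let `E` be a finite-dimensional real inner product space, `K ⊆ E` a nonempty
closed cone, `v ∈ E`, and `u` a projection of `v` onto `K`. Then
`‖u‖ = max(0, sup{⟪v, z⟫ : z ∈ K, ‖z‖ = 1})` (with `sup ∅ = 0`, which is Lean's `sSup` convention
on `ℝ`) and `‖u‖² = ⟪v, u⟫`. In particular, any two projections of `v` onto `K` have the same
norm. -/
theorem stmt0 {E : Type*} [NormedAddCommGroup E] [InnerProductSpace ℝ E] [FiniteDimensional ℝ E]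
    (K : Set E) (hne : K.Nonempty) (hcl : IsClosed K)
    (hcone : ∀ u ∈ K, ∀ α : ℝ, 0 < α → α • u ∈ K)
    (v u : E) (huK : u ∈ K) (hproj : ∀ z ∈ K, ‖v - u‖ ≤ ‖v - z‖) :
    ‖u‖ = max 0 (sSup {t : ℝ | ∃ z ∈ K, ‖z‖ = 1 ∧ (inner ℝ v z : ℝ) = t}) ∧
    ‖u‖ ^ 2 = (inner ℝ v u : ℝ) ∧
    ∀ u' : E, u' ∈ K → (∀ z ∈ K, ‖v - u'‖ ≤ ‖v - z‖) → ‖u'‖ = ‖u‖ := by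
  obtain ⟨h1, h2⟩ := aux0 K hcone v u huK hproj
  refine ⟨h2, h1, ?_⟩
  intro u' hu'K hproj'
  obtain ⟨_, h2'⟩ := aux0 K hcone v u' hu'K hproj'
  rw [h2', h2]
end

section
/- Let E be a finite-dimensional real inner product space and K ⊆ E a nonempty closed cone. For any v, v' ∈ E, if u is a projection of v onto K and u' is a projection of v' onto K, then |‖u‖ − ‖u'‖| ≤ ‖v − v'‖; that is, the map sending v to the (common) norm of its projections onto K is 1-Lipschitz. -/
/-- Orthogonality: a projection onto a cone satisfies `⟪v - u, u⟫ = 0`. -/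
lemma proj_cone_inner_eq {E : Type*} [NormedAddCommGroup E] [InnerProductSpace ℝ E]
    (K : Set E) (hcone : ∀ u ∈ K, ∀ α : ℝ, 0 < α → α • u ∈ K)
    (v u : E) (huK : u ∈ K) (hproj : ∀ z ∈ K, ‖v - u‖ ≤ ‖v - z‖) :
    inner ℝ (v - u) u = (0 : ℝ) := by
  by_cases hu : u = 0
  · simp [hu]
  set c : ℝ := inner ℝ (v - u) u with hc
  have hun : (0:ℝ) < ‖u‖ ^ 2 := pow_pos (norm_pos_iff.mpr hu) 2
  have key : ∀ t : ℝ, -1 < t → 0 ≤ -2 * t * c + t ^ 2 * ‖u‖ ^ 2 := by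
    intro t ht
    have hmem : (1 + t) • u ∈ K := hcone u huK (1 + t) (by linarith)
    have h1 : ‖v - u‖ ≤ ‖v - (1 + t) • u‖ := hproj _ hmem
    have h2 : v - (1 + t) • u = (v - u) - t • u := by
      rw [add_smul, one_smul]; abel
    have h3 : ‖(v - u) - t • u‖ ^ 2 = ‖v - u‖ ^ 2 - 2 * (t * c) + t ^ 2 * ‖u‖ ^ 2 := by
      rw [@norm_sub_sq_real, real_inner_smul_right, norm_smul, Real.norm_eq_abs, mul_pow,
        sq_abs]
    have h4 : ‖v - u‖ ^ 2 ≤ ‖(v - u) - t • u‖ ^ 2 := by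
      rw [← h2]; exact pow_le_pow_left₀ (norm_nonneg _) h1 2
    rw [h3] at h4
    linarith
  by_contra hne0
  have habs : (0:ℝ) < |c| := abs_pos.mpr hne0
  obtain ⟨t, htdef⟩ : ∃ t : ℝ, t = c / (‖u‖ ^ 2 + |c|) := ⟨_, rfl⟩
  have hden : (0:ℝ) < ‖u‖ ^ 2 + |c| := by linarith
  have ht1 : -1 < t := by
    rw [htdef, neg_lt, ← neg_div, div_lt_one hden]
    have := neg_abs_le c
    linarith [abs_nonneg c]
  have := key t ht1
  have ht : t * (‖u‖ ^ 2 + |c|) = c := by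
    rw [htdef, div_mul_cancel₀ _ hden.ne']
  have htne : t ≠ 0 := by
    intro h
    rw [h, zero_mul] at ht
    exact hne0 ht.symm
  have ht2 : 0 < t ^ 2 := pow_two_pos_of_ne_zero htne
  have hct : t * c = t ^ 2 * (‖u‖ ^ 2 + |c|) := by
    conv_lhs => rw [← ht]
    ring
  nlinarith [mul_pos ht2 hun, mul_pos ht2 habs, hct, this]

/-- For any unit vector `z` in the cone, `⟪v', z⟫ ≤ ‖u'‖` where `u'` projects `v'`. -/
lemma proj_cone_inner_le {E : Type*} [NormedAddCommGroup E] [InnerProductSpace ℝ E]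
    (K : Set E) (hcone : ∀ u ∈ K, ∀ α : ℝ, 0 < α → α • u ∈ K)
    (v' u' : E) (huK' : u' ∈ K) (hproj' : ∀ z ∈ K, ‖v' - u'‖ ≤ ‖v' - z‖)
    (z : E) (hzK : z ∈ K) (hz : ‖z‖ = 1) :
    inner ℝ v' z ≤ ‖u'‖ := by
  set s : ℝ := inner ℝ v' z with hs
  by_cases hspos : 0 < s
  · have hmem : s • z ∈ K := hcone z hzK s hspos
    have h1 : ‖v' - u'‖ ≤ ‖v' - s • z‖ := hproj' _ hmem
    have h1' : ‖v' - u'‖ ^ 2 ≤ ‖v' - s • z‖ ^ 2 := pow_le_pow_left₀ (norm_nonneg _) h1 2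
    have h2 : ‖v' - s • z‖ ^ 2 = ‖v'‖ ^ 2 - s ^ 2 := by
      rw [@norm_sub_sq_real, real_inner_smul_right, norm_smul, hz, ← hs]
      simp [sq_abs]
      ring
    have horth : inner ℝ (v' - u') u' = (0:ℝ) :=
      proj_cone_inner_eq K hcone v' u' huK' hproj'
    have h3 : ‖v' - u'‖ ^ 2 = ‖v'‖ ^ 2 - ‖u'‖ ^ 2 := by
      have hiu : inner ℝ v' u' = (‖u'‖:ℝ) ^ 2 := by
        have := horth
        rw [inner_sub_left, real_inner_self_eq_norm_sq] at this
        linarith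
      rw [@norm_sub_sq_real, hiu]; ring
    have hs2 : s ^ 2 ≤ ‖u'‖ ^ 2 := by rw [h2, h3] at h1'; linarith
    nlinarith [norm_nonneg u', hs2, hspos]
  · push_neg at hspos
    exact le_trans hspos (norm_nonneg _)

lemma one_sided {E : Type*} [NormedAddCommGroup E] [InnerProductSpace ℝ E]
    (K : Set E) (hcone : ∀ u ∈ K, ∀ α : ℝ, 0 < α → α • u ∈ K)
    (v v' u u' : E)
    (huK : u ∈ K) (hproj : ∀ z ∈ K, ‖v - u‖ ≤ ‖v - z‖)
    (huK' : u' ∈ K) (hproj' : ∀ z ∈ K, ‖v' - u'‖ ≤ ‖v' - z‖) :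
    ‖u‖ - ‖u'‖ ≤ ‖v - v'‖ := by
  by_cases hu : u = 0
  · simp [hu]
    exact le_trans (neg_nonpos.mpr (norm_nonneg u')) (norm_nonneg _)
  have hun : (0:ℝ) < ‖u‖ := norm_pos_iff.mpr hu
  set z : E := ‖u‖⁻¹ • u with hz
  have hzK : z ∈ K := hcone u huK _ (inv_pos.mpr hun)
  have hz1 : ‖z‖ = 1 := by
    rw [hz, norm_smul, norm_inv, norm_norm]
    field_simp
  have horth : inner ℝ (v - u) u = (0:ℝ) := proj_cone_inner_eq K hcone v u huK hproj
  have hvu : inner ℝ v u = (‖u‖:ℝ) ^ 2 := by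
    rw [inner_sub_left, real_inner_self_eq_norm_sq] at horth; linarith
  have hvz : inner ℝ v z = (‖u‖:ℝ) := by
    rw [hz, real_inner_smul_right, hvu]
    field_simp
  have hb : inner ℝ v' z ≤ ‖u'‖ := proj_cone_inner_le K hcone v' u' huK' hproj' z hzK hz1
  have hcs : inner ℝ (v - v') z ≤ ‖v - v'‖ := by
    calc inner ℝ (v - v') z ≤ ‖v - v'‖ * ‖z‖ := real_inner_le_norm _ _
    _ = ‖v - v'‖ := by rw [hz1, mul_one]
  have : inner ℝ (v - v') z = (‖u‖:ℝ) - inner ℝ v' z := by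
    rw [inner_sub_left, hvz]
  linarith

/-- Let `E` be a finite-dimensional real inner product space and `K ⊆ E` a nonempty
closed cone. For any `v, v' ∈ E`, if `u` is a projection of `v` onto `K` and `u'` is a projection
of `v'` onto `K`, then `|‖u‖ − ‖u'‖| ≤ ‖v − v'‖`: the map sending `v` to the (common) norm of its
projections onto `K` is 1-Lipschitz. -/
theorem stmt2 {E : Type*} [NormedAddCommGroup E] [InnerProductSpace ℝ E] [FiniteDimensional ℝ E]
    (K : Set E) (hne : K.Nonempty) (hcl : IsClosed K)
    (hcone : ∀ u ∈ K, ∀ α : ℝ, 0 < α → α • u ∈ K)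
    (v v' u u' : E)
    (huK : u ∈ K) (hproj : ∀ z ∈ K, ‖v - u‖ ≤ ‖v - z‖)
    (huK' : u' ∈ K) (hproj' : ∀ z ∈ K, ‖v' - u'‖ ≤ ‖v' - z‖) :
    |‖u‖ - ‖u'‖| ≤ ‖v - v'‖ := by
  rw [abs_sub_le_iff]
  constructor
  · exact one_sided K hcone v v' u u' huK hproj huK' hproj'
  · rw [← norm_sub_rev]
    exact one_sided K hcone v' v u' u huK' hproj' huK hproj
end

section
/- Let E be a finite-dimensional real inner product space and K ⊆ E a nonempty closed convex cone. For every v ∈ E, if u is the projection of v onto K, then ‖u‖ equals the distance from v to the polar cone K°, i.e. ‖u‖ = inf{‖v − w‖ : w ∈ K°}. -/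
/-- Let `E` be a finite-dimensional real inner product space and `K ⊆ E` a nonempty
closed convex cone. For every `v ∈ E`, if `u` is the projection of `v` onto `K`, then `‖u‖` equals
the distance from `v` to the polar cone `K°`, i.e. `‖u‖ = inf{‖v − w‖ : w ∈ K°}`. -/
theorem stmt3 {E : Type*} [NormedAddCommGroup E] [InnerProductSpace ℝ E] [FiniteDimensional ℝ E]
    (K : Set E) (hne : K.Nonempty) (hcl : IsClosed K) (hconv : Convex ℝ K)
    (hcone : ∀ u ∈ K, ∀ α : ℝ, 0 < α → α • u ∈ K)
    (v u : E) (huK : u ∈ K) (hproj : ∀ z ∈ K, ‖v - u‖ ≤ ‖v - z‖) :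
    ‖u‖ = Metric.infDist v {w : E | ∀ z ∈ K, (inner ℝ w z : ℝ) ≤ 0} := by
  -- Step 1: variational inequality
  haveI : Nonempty K := hne.to_subtype
  have hinf : ‖v - u‖ = ⨅ w : K, ‖v - w‖ := by
    refine le_antisymm (le_ciInf fun w => hproj w w.2) ?_
    have hbdd : BddBelow (Set.range fun w : K => ‖v - (w : E)‖) := by
      refine ⟨0, ?_⟩
      rintro x ⟨w, rfl⟩
      exact norm_nonneg _
    exact ciInf_le hbdd ⟨u, huK⟩
  have hvar : ∀ z ∈ K, (inner ℝ (v - u) (z - u) : ℝ) ≤ 0 :=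
    (norm_eq_iInf_iff_real_inner_le_zero hconv huK).mp hinf
  -- Step 2: ⟪v - u, u⟫ = 0
  have horth : (inner ℝ (v - u) u : ℝ) = 0 := by
    have h2 := hvar ((2 : ℝ) • u) (hcone u huK 2 (by norm_num))
    have hh : (2:ℝ) • u - u = u := by
      rw [two_smul]; abel
    rw [hh] at h2
    have h1 := hvar (((1:ℝ)/2) • u) (hcone u huK _ (by norm_num))
    have hh1 : ((1:ℝ)/2) • u - u = (-(1/2) : ℝ) • u := by
      rw [show (-(1/2) : ℝ) = 1/2 - 1 by norm_num, sub_smul, one_smul]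
    rw [hh1, real_inner_smul_right] at h1
    nlinarith
  -- Step 3: ⟪v - u, z⟫ ≤ 0 for all z ∈ K, i.e. v - u ∈ K°
  have hpolar : ∀ z ∈ K, (inner ℝ (v - u) z : ℝ) ≤ 0 := by
    intro z hz
    have := hvar z hz
    rw [inner_sub_right, horth] at this
    linarith
  set P : Set E := {w : E | ∀ z ∈ K, (inner ℝ w z : ℝ) ≤ 0} with hP
  have hmem : v - u ∈ P := hpolar
  have hPne : P.Nonempty := ⟨v - u, hmem⟩
  refine le_antisymm ?_ ?_
  · -- ‖u‖ ≤ ‖v - w‖ for all w ∈ P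
    rw [Metric.infDist_eq_iInf]
    haveI : Nonempty P := hPne.to_subtype
    refine le_ciInf fun wp => ?_
    obtain ⟨w, hw⟩ := wp
    rw [dist_eq_norm]
    have key : ‖u‖ ^ 2 ≤ ‖v - w‖ ^ 2 := by
      have hdecomp : v - w = u + ((v - u) - w) := by abel
      have hx : (inner ℝ u ((v - u) - w) : ℝ) ≥ 0 := by
        rw [inner_sub_right]
        have h1 : (inner ℝ u (v - u) : ℝ) = 0 := by
          rw [real_inner_comm] at horth; exact horth
        have h2 : (inner ℝ u w : ℝ) ≤ 0 := by
          rw [real_inner_comm]; exact hw u huK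
        linarith
      rw [hdecomp, norm_add_sq_real]
      nlinarith [sq_nonneg ‖(v - u) - w‖]
    nlinarith [norm_nonneg u, norm_nonneg (v - w)]
  · have := Metric.infDist_le_dist_of_mem (x := v) hmem
    rwa [dist_eq_norm, show v - (v - u) = u by abel] at this
end

section
/- Let E be a finite-dimensional real inner product space and K ⊆ E a nonempty closed cone. Let v ∈ E and write v = u + w, where u is the orthogonal projection of v onto the linear span of K and w = v − u is orthogonal to that span. Then the set of projections of v onto K equals the set of projections of u onto K; in particular their norms agree. Moreover, the distance from v to the polar cone K° equals the distance from u to K°. -/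
/-- Let `E` be a finite-dimensional real inner product space and `K ⊆ E` a nonempty
closed cone. Let `v ∈ E` and write `v = u + w`, where `u` is the orthogonal projection of `v` onto
the linear span of `K` (i.e. `u ∈ span K` and `w = v − u` is orthogonal to that span). Then the
set of projections of `v` onto `K` equals the set of projections of `u` onto `K` (in particular
their norms agree), and the distance from `v` to the polar cone `K°` equals the distance from `u`
to `K°`. -/
theorem stmt4 {E : Type*} [NormedAddCommGroup E] [InnerProductSpace ℝ E] [FiniteDimensional ℝ E]
    (K : Set E) (hne : K.Nonempty) (hcl : IsClosed K)
    (hcone : ∀ u ∈ K, ∀ α : ℝ, 0 < α → α • u ∈ K)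
    (v u : E) (hu : u ∈ Submodule.span ℝ K)
    (horth : ∀ z ∈ Submodule.span ℝ K, (inner ℝ (v - u) z : ℝ) = 0) :
    {p : E | p ∈ K ∧ ∀ z ∈ K, ‖v - p‖ ≤ ‖v - z‖} =
      {p : E | p ∈ K ∧ ∀ z ∈ K, ‖u - p‖ ≤ ‖u - z‖} ∧
    Metric.infDist v {w : E | ∀ z ∈ K, (inner ℝ w z : ℝ) ≤ 0} =
      Metric.infDist u {w : E | ∀ z ∈ K, (inner ℝ w z : ℝ) ≤ 0} := by
  -- Pythagoras: for z ∈ K, ‖v - z‖² = ‖v - u‖² + ‖u - z‖²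
  have hpyth : ∀ z ∈ K, ‖v - z‖ ^ 2 = ‖v - u‖ ^ 2 + ‖u - z‖ ^ 2 := by
    intro z hz
    have hz' : z ∈ Submodule.span ℝ K := Submodule.subset_span hz
    have hmem : u - z ∈ Submodule.span ℝ K := Submodule.sub_mem _ hu hz'
    have h0 : (inner ℝ (v - u) (u - z) : ℝ) = 0 := horth _ hmem
    have : v - z = (v - u) + (u - z) := by abel
    rw [this, norm_add_sq_real, h0]
    ring
  -- equivalence of minimization
  have hiff : ∀ p ∈ K, ((∀ z ∈ K, ‖v - p‖ ≤ ‖v - z‖) ↔ (∀ z ∈ K, ‖u - p‖ ≤ ‖u - z‖)) := by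
    intro p hp
    constructor
    · intro h z hz
      have h1 := h z hz
      have h2 : ‖v - p‖ ^ 2 ≤ ‖v - z‖ ^ 2 :=
        pow_le_pow_left₀ (norm_nonneg _) h1 2
      rw [hpyth p hp, hpyth z hz] at h2
      have h3 : ‖u - p‖ ^ 2 ≤ ‖u - z‖ ^ 2 := by linarith
      exact (pow_le_pow_iff_left₀ (norm_nonneg _) (norm_nonneg _) two_ne_zero).1 h3
    · intro h z hz
      have h1 := h z hz
      have h2 : ‖u - p‖ ^ 2 ≤ ‖u - z‖ ^ 2 :=
        pow_le_pow_left₀ (norm_nonneg _) h1 2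
      have h3 : ‖v - p‖ ^ 2 ≤ ‖v - z‖ ^ 2 := by
        rw [hpyth p hp, hpyth z hz]; linarith
      exact (pow_le_pow_iff_left₀ (norm_nonneg _) (norm_nonneg _) two_ne_zero).1 h3
  constructor
  · ext p
    simp only [Set.mem_setOf_eq]
    exact and_congr_right fun hp => hiff p hp
  · set S : Set E := {w : E | ∀ z ∈ K, (inner ℝ w z : ℝ) ≤ 0} with hS
    have hSne : S.Nonempty := ⟨0, fun z _ => by simp⟩
    have hwz : ∀ z ∈ K, (inner ℝ (v - u) z : ℝ) = 0 := fun z hz =>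
      horth z (Submodule.subset_span hz)
    have haddS : ∀ p ∈ S, p + (v - u) ∈ S := by
      intro p hp z hz
      rw [inner_add_left, hwz z hz]
      simpa using hp z hz
    have hsubS : ∀ p ∈ S, p - (v - u) ∈ S := by
      intro p hp z hz
      rw [inner_sub_left, hwz z hz]
      simpa using hp z hz
    have : Nonempty ↑S := hSne.to_subtype
    apply le_antisymm
    · rw [Metric.infDist_eq_iInf (x := u) (s := S)]
      apply le_ciInf
      rintro ⟨p, hp⟩
      have := Metric.infDist_le_dist_of_mem (x := v) (haddS p hp)
      calc Metric.infDist v S ≤ dist v (p + (v - u)) := this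
        _ = dist u p := by rw [dist_eq_norm, dist_eq_norm]; congr 1; abel
    · rw [Metric.infDist_eq_iInf (x := v) (s := S)]
      apply le_ciInf
      rintro ⟨p, hp⟩
      have := Metric.infDist_le_dist_of_mem (x := u) (hsubS p hp)
      calc Metric.infDist u S ≤ dist u (p - (v - u)) := this
        _ = dist v p := by rw [dist_eq_norm, dist_eq_norm]; congr 1; abel
end

section
/- Let E be a finite-dimensional real inner product space, K ⊆ E a nonempty closed cone, v ∈ E, and u a projection of v onto K. Then ‖u‖ ≤ inf{‖v − w‖ : w ∈ K°}, and moreover ‖u‖ = 0 if and only if inf{‖v − w‖ : w ∈ K°} = 0. -/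
/-- Let `E` be a finite-dimensional real inner ℝ product space, `K ⊆ E` a nonempty
closed cone, `v ∈ E`, and `u` a projection of `v` onto `K`. Then `‖u‖ ≤ inf{‖v − w‖ : w ∈ K°}`,
and moreover `‖u‖ = 0` if and only if `inf{‖v − w‖ : w ∈ K°} = 0`. -/
theorem stmt6 {E : Type*} [NormedAddCommGroup E] [InnerProductSpace ℝ E] [FiniteDimensional ℝ E]
    (K : Set E) (hne : K.Nonempty) (hcl : IsClosed K)
    (hcone : ∀ u ∈ K, ∀ α : ℝ, 0 < α → α • u ∈ K)
    (v u : E) (huK : u ∈ K) (hproj : ∀ z ∈ K, ‖v - u‖ ≤ ‖v - z‖) :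
    ‖u‖ ≤ Metric.infDist v {w : E | ∀ z ∈ K, (inner ℝ w z : ℝ) ≤ 0} ∧
    (‖u‖ = 0 ↔ Metric.infDist v {w : E | ∀ z ∈ K, (inner ℝ w z : ℝ) ≤ 0} = 0) := by
  set Kp : Set E := {w : E | ∀ z ∈ K, (inner ℝ w z : ℝ) ≤ 0} with hKpdef
  have h0 : (0 : E) ∈ Kp := by intro z hz; simp
  have hKpne : Kp.Nonempty := ⟨0, h0⟩
  set c : ℝ := inner ℝ (v - u) u with hc
  set n : ℝ := ‖u‖ ^ 2 with hn
  have hn0 : 0 ≤ n := by positivity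
  -- expansion inequality
  have hq : ∀ t : ℝ, t < 1 → 0 ≤ 2 * t * c + t ^ 2 * n := by
    intro t ht
    have hα : (0 : ℝ) < 1 - t := by linarith
    have h1 : ‖v - u‖ ≤ ‖v - (1 - t) • u‖ := hproj _ (hcone u huK _ hα)
    have h2 : v - (1 - t) • u = (v - u) + t • u := by
      rw [sub_smul, one_smul]; abel
    have h3 : ‖(v - u) + t • u‖ ^ 2
        = ‖v - u‖ ^ 2 + 2 * (t * c) + t ^ 2 * n := by
      rw [norm_add_sq_real, real_inner_smul_right, norm_smul, mul_pow, Real.norm_eq_abs, sq_abs]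
    have h4 : ‖v - u‖ ^ 2 ≤ ‖(v - u) + t • u‖ ^ 2 := by
      rw [← h2]
      exact pow_le_pow_left₀ (norm_nonneg _) h1 2
    nlinarith [h4, h3]
  -- orthogonality
  have hc1 : 0 ≤ c := by
    by_contra h
    push_neg at h
    set t := min (1 / 2 : ℝ) (-c / (n + 1)) with htdef
    have htpos : 0 < t := lt_min (by norm_num) (div_pos (by linarith) (by linarith))
    have ht1 : t < 1 := lt_of_le_of_lt (min_le_left _ _) (by norm_num)
    have h2 : t * (n + 1) ≤ -c := by
      have := min_le_right (1 / 2 : ℝ) (-c / (n + 1))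
      calc t * (n + 1) ≤ (-c / (n + 1)) * (n + 1) := by
            apply mul_le_mul_of_nonneg_right this (by linarith)
        _ = -c := by field_simp
    have hq' := hq t ht1
    nlinarith [mul_le_mul_of_nonneg_left h2 htpos.le, mul_pos htpos htpos,
      mul_neg_of_pos_of_neg htpos h]
  have hc2 : c ≤ 0 := by
    by_contra h
    push_neg at h
    set s := min (1 / 2 : ℝ) (c / (n + 1)) with hsdef
    have hspos : 0 < s := lt_min (by norm_num) (div_pos h (by linarith))
    have hs1 : -s < 1 := by linarith
    have h2 : s * (n + 1) ≤ c := by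
      have := min_le_right (1 / 2 : ℝ) (c / (n + 1))
      calc s * (n + 1) ≤ (c / (n + 1)) * (n + 1) := by
            apply mul_le_mul_of_nonneg_right this (by linarith)
        _ = c := by field_simp
    have hq' := hq (-s) hs1
    nlinarith [mul_le_mul_of_nonneg_left h2 hspos.le, mul_pos hspos hspos,
      mul_pos hspos h]
  have horth : c = 0 := le_antisymm hc2 hc1
  -- main bound : ‖u‖ ≤ ‖v - w‖ for w ∈ K°
  have hmain : ∀ w ∈ Kp, ‖u‖ ≤ ‖v - w‖ := by
    intro w hw
    have hwu : (inner ℝ w u : ℝ) ≤ 0 := hw u huK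
    have h2 : v - w = u + ((v - u) - w) := by abel
    have h3 : ‖v - w‖ ^ 2 = ‖u‖ ^ 2 + 2 * (inner ℝ u ((v - u) - w) : ℝ) + ‖(v - u) - w‖ ^ 2 := by
      rw [h2, norm_add_sq_real]
    have h4 : (inner ℝ u ((v - u) - w) : ℝ) = c - (inner ℝ w u : ℝ) := by
      rw [inner_sub_right, hc, real_inner_comm u (v - u), real_inner_comm u w]
    have h5 : ‖u‖ ^ 2 ≤ ‖v - w‖ ^ 2 := by
      rw [h3, h4, horth]
      nlinarith [sq_nonneg ‖(v - u) - w‖]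
    nlinarith [norm_nonneg u, norm_nonneg (v - w), h5]
  have hle : ‖u‖ ≤ Metric.infDist v Kp := by
    by_contra h
    push_neg at h
    obtain ⟨w, hw, hwd⟩ := (Metric.infDist_lt_iff hKpne).mp h
    rw [dist_eq_norm] at hwd
    exact absurd (hmain w hw) (not_le.mpr hwd)
  refine ⟨hle, ?_, ?_⟩
  · -- forward: u = 0 → infDist = 0
    intro hu0
    have hu : u = 0 := norm_eq_zero.mp hu0
    have hvK : v ∈ Kp := by
      intro z hz
      by_contra hvz
      push_neg at hvz
      have hz0 : z ≠ 0 := by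
        intro hz0; rw [hz0] at hvz; simp at hvz
      have hzn : (0:ℝ) < ‖z‖ ^ 2 := pow_pos (norm_pos_iff.mpr hz0) 2
      set α := (inner ℝ v z : ℝ) / ‖z‖ ^ 2 with hα
      have hαpos : 0 < α := div_pos hvz hzn
      have h1 : ‖v - u‖ ≤ ‖v - α • z‖ := hproj _ (hcone z hz α hαpos)
      rw [hu, sub_zero] at h1
      have h2 : ‖v - α • z‖ ^ 2 = ‖v‖ ^ 2 - 2 * (α * (inner ℝ v z : ℝ)) + α ^ 2 * ‖z‖ ^ 2 := by
        rw [norm_sub_sq_real, real_inner_smul_right, norm_smul, mul_pow, Real.norm_eq_abs, sq_abs]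
      have h3 : ‖v‖ ^ 2 ≤ ‖v - α • z‖ ^ 2 := pow_le_pow_left₀ (norm_nonneg _) h1 2
      rw [h2] at h3
      have hαz : α * ‖z‖ ^ 2 = (inner ℝ v z : ℝ) := div_mul_cancel₀ _ hzn.ne'
      nlinarith [mul_pos hαpos hvz]
    have := Metric.infDist_zero_of_mem hvK
    exact this
  · -- backward
    intro hinf
    have := norm_nonneg u
    linarith [hle, hinf ▸ hle]
end

section
/- Let E be a finite-dimensional real inner product space, X ⊆ E, and let (x_k) be a sequence in X converging to x ∈ X. Then for every v ∈ E, v belongs to the polar (limsup_k T_{x_k}X)° of the outer limit of the tangent cones if and only if s(v, T_{x_k}X) → 0 as k → ∞. -/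
open Filter Topology

/-- The Bouligand tangent cone of `X ⊆ E` at `x`. -/
def bTangentCone {E : Type*} [NormedAddCommGroup E] [NormedSpace ℝ E]
    (X : Set E) (x : E) : Set E :=
  {v | ∃ (xk : ℕ → E) (τ : ℕ → ℝ), (∀ k, xk k ∈ X) ∧ (∀ k, 0 < τ k) ∧
    Tendsto τ atTop (𝓝 0) ∧ Tendsto (fun k => (τ k)⁻¹ • (xk k - x)) atTop (𝓝 v)}

/-- The polar of a set `K ⊆ E`: `K° = {w : ⟪w, z⟫ ≤ 0 for all z ∈ K}`. -/
def polarCone {E : Type*} [NormedAddCommGroup E] [InnerProductSpace ℝ E] (K : Set E) : Set E :=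
  {w | ∀ z ∈ K, (inner ℝ w z : ℝ) ≤ 0}

/-- The stationarity measure `s(v, K) = max(0, sup{⟪v, z⟫ : z ∈ K, ‖z‖ = 1})`; note that on `ℝ`,
Lean's `sSup` of the empty set is `0`, matching the convention `sup ∅ = 0`. -/
noncomputable def statMeasure {E : Type*} [NormedAddCommGroup E] [InnerProductSpace ℝ E]
    (v : E) (K : Set E) : ℝ :=
  max 0 (sSup {t : ℝ | ∃ z ∈ K, ‖z‖ = 1 ∧ (inner ℝ v z : ℝ) = t})

/-- The outer limit `limsup_k S_k`: points `u` for which there are a strictly increasing sequence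
of indices `(k_i)` and points `u_i ∈ S_{k_i}` with `u_i → u`. -/
def outerLimit {E : Type*} [NormedAddCommGroup E] (S : ℕ → Set E) : Set E :=
  {u | ∃ φ : ℕ → ℕ, StrictMono φ ∧
    ∃ uk : ℕ → E, (∀ i, uk i ∈ S (φ i)) ∧ Tendsto uk atTop (𝓝 u)}

lemma bTangentCone_smul {E : Type*} [NormedAddCommGroup E] [NormedSpace ℝ E]
    {X : Set E} {y z : E} {c : ℝ} (hc : 0 < c) (hz : z ∈ bTangentCone X y) :
    c • z ∈ bTangentCone X y := by
  obtain ⟨xs, τ, hX, hτ, hτ0, hl⟩ := hz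
  refine ⟨xs, fun k => τ k / c, hX, fun k => div_pos (hτ k) hc, ?_, ?_⟩
  · simpa using hτ0.div_const c
  · have heq : ∀ k, c • ((τ k)⁻¹ • (xs k - y)) = (τ k / c)⁻¹ • (xs k - y) := by
      intro k
      rw [smul_smul, inv_div, div_eq_mul_inv]
    exact (hl.const_smul c).congr heq

lemma inner_le_statMeasure {E : Type*} [NormedAddCommGroup E] [InnerProductSpace ℝ E]
    (v : E) (K : Set E) {z : E} (hz : z ∈ K) (hn : ‖z‖ = 1) :
    (inner ℝ v z : ℝ) ≤ statMeasure v K := by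
  have hbdd : BddAbove {t : ℝ | ∃ z ∈ K, ‖z‖ = 1 ∧ (inner ℝ v z : ℝ) = t} := by
    refine ⟨‖v‖, ?_⟩
    rintro t ⟨w, hw, hwn, rfl⟩
    calc (inner ℝ v w : ℝ) ≤ ‖v‖ * ‖w‖ := real_inner_le_norm v w
      _ = ‖v‖ := by rw [hwn, mul_one]
  exact le_max_of_le_right (le_csSup hbdd ⟨z, hz, hn, rfl⟩)

/-- Let `E` be a finite-dimensional real inner product space, `X ⊆ E`, and `(x_k)` a
sequence in `X` converging to `x ∈ X`. Then for every `v ∈ E`, `v` belongs to the polar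
`(limsup_k T_{x_k}X)°` of the outer limit of the tangent cones if and only if
`s(v, T_{x_k}X) → 0` as `k → ∞`. -/
theorem stmt7 {E : Type*} [NormedAddCommGroup E] [InnerProductSpace ℝ E] [FiniteDimensional ℝ E]
    (X : Set E) (x : E) (hx : x ∈ X) (xk : ℕ → E) (hxk : ∀ k, xk k ∈ X)
    (hlim : Tendsto xk atTop (𝓝 x)) (v : E) :
    v ∈ polarCone (outerLimit fun k => bTangentCone X (xk k)) ↔
      Tendsto (fun k => statMeasure v (bTangentCone X (xk k))) atTop (𝓝 0) := by
  set K : ℕ → Set E := fun k => bTangentCone X (xk k) with hK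
  set s : ℕ → ℝ := fun k => statMeasure v (K k) with hs
  have hs0 : ∀ k, 0 ≤ s k := fun k => le_max_left _ _
  constructor
  · intro hpol
    by_contra hnot
    rw [Metric.tendsto_atTop] at hnot
    push_neg at hnot
    obtain ⟨ε, hε, hfreq⟩ := hnot
    have hfreq' : ∃ᶠ k in atTop, ε ≤ s k := by
      rw [frequently_atTop]
      intro N
      obtain ⟨k, hk, hd⟩ := hfreq N
      refine ⟨k, hk, ?_⟩
      rwa [Real.dist_eq, sub_zero, abs_of_nonneg (hs0 k)] at hd
    obtain ⟨φ, hφ, hφs⟩ := extraction_of_frequently_atTop hfreq'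
    -- for each i, pick a unit vector z i in K (φ i) with inner v (z i) > ε/2
    have hz : ∀ i, ∃ z, z ∈ K (φ i) ∧ ‖z‖ = 1 ∧ ε / 2 < (inner ℝ v z : ℝ) := by
      intro i
      set T := {t : ℝ | ∃ z ∈ K (φ i), ‖z‖ = 1 ∧ (inner ℝ v z : ℝ) = t} with hT
      have hεs : ε ≤ sSup T := by
        have h1 : ε ≤ max 0 (sSup T) := hφs i
        rcases max_cases 0 (sSup T) with ⟨he, hle⟩ | ⟨he, hlt⟩
        · linarith [h1.trans_eq he]
        · rw [he] at h1; exact h1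
      have hne : T.Nonempty := by
        by_contra hc
        rw [Set.not_nonempty_iff_eq_empty] at hc
        rw [hc, Real.sSup_empty] at hεs
        linarith
      have hlt : ε / 2 < sSup T := by linarith
      obtain ⟨t, htT, htlt⟩ := exists_lt_of_lt_csSup hne hlt
      obtain ⟨z, hzK, hzn, rfl⟩ := htT
      exact ⟨z, hzK, hzn, htlt⟩
    choose z hzK hzn hzi using hz
    have hsph : ∀ i, z i ∈ Metric.sphere (0 : E) 1 := by
      intro i; simpa [Metric.mem_sphere, dist_zero_right] using hzn i
    obtain ⟨z₀, hz₀, ψ, hψ, hzt⟩ := (isCompact_sphere (0:E) 1).tendsto_subseq hsph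
    have hz₀mem : z₀ ∈ outerLimit fun k => bTangentCone X (xk k) :=
      ⟨φ ∘ ψ, hφ.comp hψ, fun i => z (ψ i), fun i => hzK (ψ i), hzt⟩
    have hle0 : (inner ℝ v z₀ : ℝ) ≤ 0 := hpol z₀ hz₀mem
    have hinner : Tendsto (fun i => (inner ℝ v (z (ψ i)) : ℝ)) atTop (𝓝 (inner ℝ v z₀ : ℝ)) :=
      (tendsto_const_nhds : Tendsto (fun _ : ℕ => v) atTop (𝓝 v)).inner hzt
    have hge : ε / 2 ≤ (inner ℝ v z₀ : ℝ) :=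
      le_of_tendsto_of_tendsto tendsto_const_nhds hinner
        (Eventually.of_forall fun i => (hzi (ψ i)).le)
    linarith
  · intro htend
    intro u hu
    obtain ⟨φ, hφ, uk, huk, hul⟩ := hu
    by_cases hu0 : u = 0
    · simp [hu0]
    · have hnu : (0:ℝ) < ‖u‖ := norm_pos_iff.2 hu0
      have hnorm : Tendsto (fun i => ‖uk i‖) atTop (𝓝 ‖u‖) := hul.norm
      have hev : ∀ᶠ i in atTop, 0 < ‖uk i‖ := hnorm.eventually (eventually_gt_nhds hnu)
      have hw : Tendsto (fun i => (‖uk i‖)⁻¹ • uk i) atTop (𝓝 ((‖u‖)⁻¹ • u)) :=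
        (hnorm.inv₀ (ne_of_gt hnu)).smul hul
      have hinner : Tendsto (fun i => (inner ℝ v ((‖uk i‖)⁻¹ • uk i) : ℝ)) atTop
          (𝓝 (inner ℝ v ((‖u‖)⁻¹ • u) : ℝ)) :=
        (tendsto_const_nhds : Tendsto (fun _ : ℕ => v) atTop (𝓝 v)).inner hw
      have hcomp : Tendsto (fun i => s (φ i)) atTop (𝓝 0) :=
        htend.comp hφ.tendsto_atTop
      have hle : ∀ᶠ i in atTop, (inner ℝ v ((‖uk i‖)⁻¹ • uk i) : ℝ) ≤ s (φ i) := by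
        filter_upwards [hev] with i hi
        have hmem : (‖uk i‖)⁻¹ • uk i ∈ K (φ i) :=
          bTangentCone_smul (inv_pos.2 hi) (huk i)
        have hn1 : ‖(‖uk i‖)⁻¹ • uk i‖ = 1 := by
          rw [norm_smul, norm_inv, norm_norm, inv_mul_cancel₀ (ne_of_gt hi)]
        exact inner_le_statMeasure v _ hmem hn1
      have hkey : (inner ℝ v ((‖u‖)⁻¹ • u) : ℝ) ≤ 0 :=
        le_of_tendsto_of_tendsto hinner hcomp hle
      have : (‖u‖)⁻¹ * (inner ℝ v u : ℝ) ≤ 0 := by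
        rwa [real_inner_smul_right] at hkey
      nlinarith [inv_pos.2 hnu]
end

section
/- Let m, n, r be positive integers. Let f : ℝ^{m×n} → ℝ be twice continuously differentiable with gradient ∇f (taken with respect to the Frobenius inner product) that is Lipschitz continuous with constant L_f ≥ 0. Define g : ℝ^{m×r} × ℝ^{n×r} → ℝ by g(L, R) = f(L Rᵀ). Suppose L ∈ ℝ^{m×r} and R ∈ ℝ^{n×r} satisfy the balance condition Lᵀ L = Rᵀ R, and suppose ε₂ ≥ 0 is such that for all L̇ ∈ ℝ^{m×r} and Ṙ ∈ ℝ^{n×r}, the second derivative at t = 0 of the map t ↦ g(L + t L̇, R + t Ṙ) is at least −ε₂·(‖L̇‖_F² + ‖Ṙ‖_F²). Let s ≥ 0 and suppose there exists w ∈ ℝ^r with ‖w‖ = 1 and ‖L w‖² ≤ s. Then for all unit vectors a ∈ ℝ^m and b ∈ ℝ^n, the Frobenius inner product satisfies ⟪∇f(L Rᵀ), a bᵀ⟫_F ≤ ε₂ + 2 L_f s; equivalently, the spectral norm of ∇f(L Rᵀ) is at most ε₂ + 2 L_f s. -/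
open Matrix

/-- The Frobenius inner product `⟪A, B⟫_F = trace(Aᵀ B)` on real matrices. -/
noncomputable def finner {m n : ℕ} (A B : Matrix (Fin m) (Fin n) ℝ) : ℝ :=
  Matrix.trace (Aᵀ * B)

/-- The Frobenius norm `‖A‖_F = √trace(Aᵀ A)`. -/
noncomputable def fnorm {m n : ℕ} (A : Matrix (Fin m) (Fin n) ℝ) : ℝ :=
  Real.sqrt (finner A A)

attribute [local instance]
  Matrix.frobeniusSeminormedAddCommGroup
  Matrix.frobeniusNormedAddCommGroup
  Matrix.frobeniusNormedSpace

/- ### Auxiliary lemmas -/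

/-- Embedding of matrices into Euclidean space, preserving the Frobenius structure. -/
noncomputable def emb {m n : ℕ} (A : Matrix (Fin m) (Fin n) ℝ) :
    EuclideanSpace ℝ (Fin m × Fin n) := WithLp.toLp 2 (fun p : Fin m × Fin n => A p.1 p.2)

lemma finner_eq_inner {m n : ℕ} (A B : Matrix (Fin m) (Fin n) ℝ) :
    finner A B = inner ℝ (emb A) (emb B) := by
  simp only [finner, Matrix.trace, Matrix.mul_apply, Matrix.diag, PiLp.inner_apply,
    RCLike.inner_apply, starRingEnd_apply, star_trivial, Matrix.transpose_apply]
  rw [Fintype.sum_prod_type, Finset.sum_comm]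
  simp [emb, mul_comm]

lemma fnorm_eq_norm {m n : ℕ} (A : Matrix (Fin m) (Fin n) ℝ) :
    fnorm A = ‖emb A‖ := by
  rw [fnorm, finner_eq_inner, real_inner_self_eq_norm_sq]
  exact Real.sqrt_sq (norm_nonneg _)

lemma emb_add {m n : ℕ} (A B : Matrix (Fin m) (Fin n) ℝ) : emb (A + B) = emb A + emb B := rfl
lemma emb_sub {m n : ℕ} (A B : Matrix (Fin m) (Fin n) ℝ) : emb (A - B) = emb A - emb B := rfl
lemma emb_smul {m n : ℕ} (t : ℝ) (A : Matrix (Fin m) (Fin n) ℝ) : emb (t • A) = t • emb A := rfl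
lemma emb_neg {m n : ℕ} (A : Matrix (Fin m) (Fin n) ℝ) : emb (-A) = -emb A := rfl

lemma fnorm_nonneg {m n : ℕ} (A : Matrix (Fin m) (Fin n) ℝ) : 0 ≤ fnorm A :=
  Real.sqrt_nonneg _

lemma fnorm_neg {m n : ℕ} (A : Matrix (Fin m) (Fin n) ℝ) : fnorm (-A) = fnorm A := by
  rw [fnorm_eq_norm, fnorm_eq_norm, emb_neg, norm_neg]

lemma abs_finner_le {m n : ℕ} (A B : Matrix (Fin m) (Fin n) ℝ) :
    |finner A B| ≤ fnorm A * fnorm B := by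
  rw [finner_eq_inner, fnorm_eq_norm, fnorm_eq_norm]
  exact abs_real_inner_le_norm _ _

lemma finner_add_right {m n : ℕ} (A B C : Matrix (Fin m) (Fin n) ℝ) :
    finner A (B + C) = finner A B + finner A C := by
  simp [finner, Matrix.mul_add]

lemma finner_smul_right {m n : ℕ} (t : ℝ) (A B : Matrix (Fin m) (Fin n) ℝ) :
    finner A (t • B) = t * finner A B := by
  simp [finner, Matrix.mul_smul, Matrix.trace_smul, smul_eq_mul]

lemma finner_neg_right {m n : ℕ} (A B : Matrix (Fin m) (Fin n) ℝ) :
    finner A (-B) = -finner A B := by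
  simp [finner, Matrix.mul_neg]

lemma finner_sub_left {m n : ℕ} (A B C : Matrix (Fin m) (Fin n) ℝ) :
    finner (A - B) C = finner A C - finner B C := by
  simp [finner, Matrix.sub_mul, Matrix.transpose_sub]

lemma fnorm_vecMulVec {m n : ℕ} (u : Fin m → ℝ) (v : Fin n → ℝ) :
    fnorm (vecMulVec u v) = Real.sqrt (∑ i, u i ^ 2) * Real.sqrt (∑ j, v j ^ 2) := by
  have h : finner (vecMulVec u v) (vecMulVec u v) = (∑ i, u i ^ 2) * (∑ j, v j ^ 2) := by
    simp only [finner, Matrix.trace, Matrix.mul_apply, Matrix.diag, Matrix.transpose_apply,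
      vecMulVec_apply]
    rw [Finset.sum_mul_sum, Finset.sum_comm]
    congr 1; ext i; congr 1; ext j; ring
  rw [fnorm, h, Real.sqrt_mul (by positivity)]

lemma vecMulVec_mul_transpose {m n r : ℕ} (a : Fin m → ℝ) (w : Fin r → ℝ)
    (R : Matrix (Fin n) (Fin r) ℝ) :
    vecMulVec a w * Rᵀ = vecMulVec a (R.mulVec w) := by
  ext i j
  simp [Matrix.mul_apply, vecMulVec_apply, Matrix.mulVec, dotProduct, Finset.mul_sum]
  congr 1; ext k; ring

lemma mul_vecMulVec_transpose {m n r : ℕ} (b : Fin n → ℝ) (w : Fin r → ℝ)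
    (L : Matrix (Fin m) (Fin r) ℝ) :
    L * (vecMulVec b w)ᵀ = vecMulVec (L.mulVec w) b := by
  ext i j
  simp [Matrix.mul_apply, vecMulVec_apply, Matrix.mulVec, dotProduct, Finset.sum_mul]
  congr 1; ext k; ring

lemma vecMulVec_mul_vecMulVec {m n r : ℕ} (a : Fin m → ℝ) (b : Fin n → ℝ) (w : Fin r → ℝ)
    (hw : ∑ j, w j ^ 2 = 1) :
    vecMulVec a w * (vecMulVec b w)ᵀ = vecMulVec a b := by
  ext i j
  simp only [Matrix.mul_apply, vecMulVec_apply, Matrix.transpose_apply]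
  calc ∑ k, a i * w k * (b j * w k) = ∑ k, a i * b j * w k ^ 2 := by congr 1; ext k; ring
  _ = a i * b j := by rw [← Finset.mul_sum, hw, mul_one]

lemma sum_sq_mulVec_eq {m n r : ℕ} (L : Matrix (Fin m) (Fin r) ℝ) (R : Matrix (Fin n) (Fin r) ℝ)
    (hbal : Lᵀ * L = Rᵀ * R) (w : Fin r → ℝ) :
    ∑ i, R.mulVec w i ^ 2 = ∑ i, L.mulVec w i ^ 2 := by
  have key : ∀ {p : ℕ} (M : Matrix (Fin p) (Fin r) ℝ),
      ∑ i, M.mulVec w i ^ 2 = w ⬝ᵥ (Mᵀ * M).mulVec w := by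
    intro p M
    rw [← Matrix.mulVec_mulVec, Matrix.mulVec_transpose, dotProduct_comm,
      ← dotProduct_mulVec]
    simp [dotProduct, sq]
  rw [key R, key L, hbal]

lemma expand_mul {m n r : ℕ} (t : ℝ) (L L' : Matrix (Fin m) (Fin r) ℝ)
    (R R' : Matrix (Fin n) (Fin r) ℝ) :
    (L + t • L') * (R + t • R')ᵀ =
      L * Rᵀ + t • (L' * Rᵀ + L * R'ᵀ) + (t ^ 2) • (L' * R'ᵀ) := by
  rw [Matrix.transpose_add, Matrix.transpose_smul, Matrix.add_mul, Matrix.mul_add, Matrix.mul_add,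
    Matrix.smul_mul, Matrix.smul_mul, Matrix.mul_smul, Matrix.mul_smul]
  rw [smul_add, smul_smul, ← sq]
  abel

/-- Let `f : ℝ^{m×n} → ℝ` be `C²` with gradient `G = ∇f` (with respect to the
Frobenius inner product, i.e. `Df(X)[V] = ⟪G X, V⟫_F`) that is `L_f`-Lipschitz (Frobenius norms).
Let `g(L, R) = f(L Rᵀ)`. Suppose `Lᵀ L = Rᵀ R`, and `ε₂ ≥ 0` is such that for all `L̇, Ṙ`, the
second derivative at `t = 0` of `t ↦ g(L + t L̇, R + t Ṙ)` is at least
`−ε₂ (‖L̇‖_F² + ‖Ṙ‖_F²)`. Let `s ≥ 0` and suppose there is a unit vector `w ∈ ℝ^r` with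
`‖L w‖² ≤ s`. Then for all unit vectors `a ∈ ℝ^m`, `b ∈ ℝ^n`,
`⟪∇f(L Rᵀ), a bᵀ⟫_F ≤ ε₂ + 2 L_f s` (equivalently, the spectral norm of `∇f(L Rᵀ)` is at most
`ε₂ + 2 L_f s`). -/
theorem stmt14 {m n r : ℕ} (hm : 0 < m) (hn : 0 < n) (hr : 0 < r)
    (f : Matrix (Fin m) (Fin n) ℝ → ℝ) (hf : ContDiff ℝ 2 f)
    (G : Matrix (Fin m) (Fin n) ℝ → Matrix (Fin m) (Fin n) ℝ)
    (hG : ∀ X V, fderiv ℝ f X V = finner (G X) V)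
    (Lf : ℝ) (hLf : 0 ≤ Lf)
    (hlip : ∀ X Y, fnorm (G X - G Y) ≤ Lf * fnorm (X - Y))
    (L : Matrix (Fin m) (Fin r) ℝ) (R : Matrix (Fin n) (Fin r) ℝ)
    (hbal : Lᵀ * L = Rᵀ * R)
    (ε₂ : ℝ) (hε₂ : 0 ≤ ε₂)
    (hsec : ∀ (L' : Matrix (Fin m) (Fin r) ℝ) (R' : Matrix (Fin n) (Fin r) ℝ),
      -ε₂ * (fnorm L' ^ 2 + fnorm R' ^ 2) ≤
        iteratedDeriv 2 (fun t : ℝ => f ((L + t • L') * (R + t • R')ᵀ)) 0)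
    (s : ℝ) (hs : 0 ≤ s)
    (w : Fin r → ℝ) (hw : ∑ j, w j ^ 2 = 1) (hLw : ∑ i, L.mulVec w i ^ 2 ≤ s)
    (a : Fin m → ℝ) (b : Fin n → ℝ)
    (ha : ∑ i, a i ^ 2 = 1) (hb : ∑ j, b j ^ 2 = 1) :
    finner (G (L * Rᵀ)) (vecMulVec a b) ≤ ε₂ + 2 * Lf * s := by
  set X : Matrix (Fin m) (Fin n) ℝ := L * Rᵀ with hX
  set L' : Matrix (Fin m) (Fin r) ℝ := vecMulVec a w with hL'
  set R' : Matrix (Fin n) (Fin r) ℝ := -(vecMulVec b w) with hR'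
  set A1 : Matrix (Fin m) (Fin n) ℝ := vecMulVec a (R.mulVec w) with hA1
  set A2 : Matrix (Fin m) (Fin n) ℝ := vecMulVec (L.mulVec w) b with hA2
  set Δ : Matrix (Fin m) (Fin n) ℝ := A1 - A2 with hΔ
  set E : Matrix (Fin m) (Fin n) ℝ := -(vecMulVec a b) with hE
  set φ : ℝ → Matrix (Fin m) (Fin n) ℝ := fun t => X + t • Δ + t ^ 2 • E with hφdef
  have hφ0 : φ 0 = X := by simp [hφdef]
  -- Step A: the curve coincides with the factored curve
  have hexp : ∀ t : ℝ, (L + t • L') * (R + t • R')ᵀ = φ t := by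
    intro t
    rw [expand_mul]
    have h1 : L' * Rᵀ = A1 := vecMulVec_mul_transpose a w R
    have h2 : L * R'ᵀ = -A2 := by
      rw [hR', Matrix.transpose_neg, Matrix.mul_neg, mul_vecMulVec_transpose]
    have h3 : L' * R'ᵀ = E := by
      rw [hR', Matrix.transpose_neg, Matrix.mul_neg, vecMulVec_mul_vecMulVec a b w hw, hE]
    rw [h1, h2, h3, hφdef]
    simp only [sub_eq_add_neg, hΔ]
    rfl
  -- differentiability setup
  have hφC : ContDiff ℝ 2 φ :=
    ((contDiff_const.add (contDiff_id.smul contDiff_const)).add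
      ((contDiff_id.pow 2).smul contDiff_const))
  have hφd : ∀ t : ℝ, HasDerivAt φ (Δ + (2 * t) • E) t := by
    intro t
    have h1 : HasDerivAt (fun u : ℝ => u • Δ) ((1:ℝ) • Δ) t := (hasDerivAt_id t).smul_const Δ
    have h2 : HasDerivAt (fun u : ℝ => u ^ 2 • E) (((2:ℕ) * t ^ (2-1) : ℝ) • E) t :=
      (hasDerivAt_pow 2 t).smul_const E
    have := ((hasDerivAt_const t X).add h1).add h2
    refine this.congr_deriv ?_
    simp
  set h : ℝ → ℝ := fun t => f (φ t) with hh
  set q : ℝ → ℝ := fun t => finner (G (φ t)) Δ with hq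
  set p : ℝ → ℝ := fun t => finner (G (φ t)) E with hp
  have hC2 : ContDiff ℝ 2 h := hf.comp hφC
  have hcomp : ∀ t : ℝ, HasDerivAt h (q t + 2 * t * p t) t := by
    intro t
    have h1 : HasDerivAt h (fderiv ℝ f (φ t) (Δ + (2*t) • E)) t :=
      ((hf.differentiable (by norm_num) (φ t)).hasFDerivAt).comp_hasDerivAt t (hφd t)
    have h2 : fderiv ℝ f (φ t) (Δ + (2*t) • E) = q t + 2 * t * p t := by
      rw [hG, finner_add_right, finner_smul_right]
    rwa [h2] at h1
  have hderiv_h : deriv h = fun t => q t + 2 * t * p t := funext fun t => (hcomp t).deriv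
  have hder : Differentiable ℝ (deriv h) := by
    have h2 : ContDiff ℝ ((1:WithTop ℕ∞) + 1) h := by
      rw [show ((1:WithTop ℕ∞) + 1) = 2 by norm_num]; exact hC2
    exact (contDiff_succ_iff_deriv.mp h2).2.2.differentiable (by norm_num)
  set c : ℝ := deriv (deriv h) 0 with hc
  have hslope : Filter.Tendsto (slope (deriv h) 0) (nhdsWithin 0 {(0:ℝ)}ᶜ) (nhds c) :=
    hasDerivAt_iff_tendsto_slope.mp ((hder 0).hasDerivAt)
  -- distance bound along the curve
  have hφX : ∀ t : ℝ, fnorm (φ t - X) ≤ |t| * fnorm Δ + t ^ 2 * fnorm E := by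
    intro t
    have hdiff : φ t - X = t • Δ + t ^ 2 • E := by rw [hφdef]; simp only [add_assoc, add_sub_cancel_left]
    rw [hdiff, fnorm_eq_norm, emb_add, emb_smul, emb_smul]
    calc ‖t • emb Δ + t ^ 2 • emb E‖ ≤ ‖t • emb Δ‖ + ‖t ^ 2 • emb E‖ := norm_add_le _ _
    _ = |t| * ‖emb Δ‖ + t ^ 2 * ‖emb E‖ := by
        rw [norm_smul, norm_smul, Real.norm_eq_abs, Real.norm_eq_abs, abs_of_nonneg (sq_nonneg t)]
    _ = |t| * fnorm Δ + t ^ 2 * fnorm E := by rw [fnorm_eq_norm, fnorm_eq_norm]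
  have habs : ∀ (t : ℝ) (V : Matrix (Fin m) (Fin n) ℝ),
      |finner (G (φ t)) V - finner (G X) V| ≤ Lf * (|t| * fnorm Δ + t ^ 2 * fnorm E) * fnorm V := by
    intro t V
    rw [← finner_sub_left]
    calc |finner (G (φ t) - G X) V| ≤ fnorm (G (φ t) - G X) * fnorm V := abs_finner_le _ _
    _ ≤ (Lf * fnorm (φ t - X)) * fnorm V :=
        mul_le_mul_of_nonneg_right (hlip _ _) (fnorm_nonneg _)
    _ ≤ Lf * (|t| * fnorm Δ + t ^ 2 * fnorm E) * fnorm V := by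
        apply mul_le_mul_of_nonneg_right _ (fnorm_nonneg _)
        exact mul_le_mul_of_nonneg_left (hφX t) hLf
  -- the comparison function
  set B : ℝ → ℝ := fun t =>
    Lf * (fnorm Δ + |t| * fnorm E) * fnorm Δ +
      2 * (p 0 + Lf * (fnorm Δ + |t| * fnorm E) * fnorm E * |t|) with hB
  have hbound : ∀ t : ℝ, t ≠ 0 → slope (deriv h) 0 t ≤ B t := by
    intro t ht
    have htpos : 0 < |t| := abs_pos.mpr ht
    have hs1 : slope (deriv h) 0 t = (q t - q 0) / t + 2 * p t := by
      rw [slope_def_field, hderiv_h]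
      simp only
      field_simp
      ring
    have hq1 : (q t - q 0) / t ≤ Lf * (fnorm Δ + |t| * fnorm E) * fnorm Δ := by
      have h1 : |q t - q 0| ≤ |t| * (Lf * (fnorm Δ + |t| * fnorm E) * fnorm Δ) := by
        have h0 : |q t - q 0| ≤ Lf * (|t| * fnorm Δ + t ^ 2 * fnorm E) * fnorm Δ := by
          rw [hq]; simp only [hφ0]; exact habs t Δ
        calc |q t - q 0| ≤ Lf * (|t| * fnorm Δ + t ^ 2 * fnorm E) * fnorm Δ := h0
        _ = |t| * (Lf * (fnorm Δ + |t| * fnorm E) * fnorm Δ) := by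
            rw [← sq_abs t]; ring
      calc (q t - q 0) / t ≤ |(q t - q 0) / t| := le_abs_self _
      _ = |q t - q 0| / |t| := abs_div _ _
      _ ≤ (|t| * (Lf * (fnorm Δ + |t| * fnorm E) * fnorm Δ)) / |t| := by gcongr
      _ = Lf * (fnorm Δ + |t| * fnorm E) * fnorm Δ := by field_simp
    have hp1 : p t ≤ p 0 + Lf * (fnorm Δ + |t| * fnorm E) * fnorm E * |t| := by
      have h1 : |p t - p 0| ≤ Lf * (fnorm Δ + |t| * fnorm E) * fnorm E * |t| := by
        calc |p t - p 0| = |finner (G (φ t)) E - finner (G X) E| := by rw [hp]; simp only [hφ0]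
        _ ≤ Lf * (|t| * fnorm Δ + t ^ 2 * fnorm E) * fnorm E := habs t E
        _ = Lf * (fnorm Δ + |t| * fnorm E) * fnorm E * |t| := by rw [← sq_abs t]; ring
      linarith [(abs_le.mp h1).2]
    rw [hs1, hB]
    simp only
    linarith
  have hBtendsto : Filter.Tendsto B (nhdsWithin 0 {(0:ℝ)}ᶜ) (nhds (B 0)) := by
    apply Filter.Tendsto.mono_left _ nhdsWithin_le_nhds
    apply Continuous.tendsto
    rw [hB]
    fun_prop
  have hB0 : B 0 = Lf * fnorm Δ ^ 2 + 2 * p 0 := by rw [hB]; simp; ring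
  have hcle : c ≤ Lf * fnorm Δ ^ 2 + 2 * p 0 := by
    rw [← hB0]
    refine le_of_tendsto_of_tendsto hslope hBtendsto ?_
    filter_upwards [self_mem_nhdsWithin] with t ht
    exact hbound t ht
  -- lower bound from hsec
  have hfn1 : fnorm L' = 1 := by rw [hL', fnorm_vecMulVec, ha, hw]; simp
  have hfn2 : fnorm R' = 1 := by rw [hR', fnorm_neg, fnorm_vecMulVec, hb, hw]; simp
  have hlow : -ε₂ * 2 ≤ c := by
    have h0 := hsec L' R'
    have heq : (fun t : ℝ => f ((L + t • L') * (R + t • R')ᵀ)) = h := by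
      funext t; rw [hexp t]
    rw [heq, hfn1, hfn2] at h0
    have hiter : iteratedDeriv 2 h 0 = c := by
      rw [show (2:ℕ) = 1 + 1 from rfl, iteratedDeriv_succ, iteratedDeriv_one]
    rw [hiter] at h0
    norm_num at h0
    linarith
  -- norm bound on Δ
  have hRw : ∑ i, R.mulVec w i ^ 2 ≤ s := by
    rw [sum_sq_mulVec_eq L R hbal w]; exact hLw
  have hA1le : fnorm A1 ≤ Real.sqrt s := by
    rw [hA1, fnorm_vecMulVec, ha]
    simpa using Real.sqrt_le_sqrt hRw
  have hA2le : fnorm A2 ≤ Real.sqrt s := by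
    rw [hA2, fnorm_vecMulVec, hb]
    simpa using Real.sqrt_le_sqrt hLw
  have hΔle : fnorm Δ ≤ 2 * Real.sqrt s := by
    rw [hΔ, fnorm_eq_norm, emb_sub]
    calc ‖emb A1 - emb A2‖ ≤ ‖emb A1‖ + ‖emb A2‖ := norm_sub_le _ _
    _ = fnorm A1 + fnorm A2 := by rw [fnorm_eq_norm, fnorm_eq_norm]
    _ ≤ 2 * Real.sqrt s := by linarith
  have hΔsq : fnorm Δ ^ 2 ≤ 4 * s := by
    have h1 : fnorm Δ ^ 2 ≤ (2 * Real.sqrt s) ^ 2 :=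
      pow_le_pow_left₀ (fnorm_nonneg _) hΔle 2
    have h2 : (2 * Real.sqrt s) ^ 2 = 4 * s := by
      rw [mul_pow, Real.sq_sqrt hs]; norm_num
    linarith
  have hp0 : p 0 = -finner (G X) (vecMulVec a b) := by
    rw [hp]; simp only [hφ0, hE]; exact finner_neg_right _ _
  have hLfΔ : Lf * fnorm Δ ^ 2 ≤ Lf * (4 * s) := mul_le_mul_of_nonneg_left hΔsq hLf
  rw [hp0] at hcle
  linarith
end

section
/- Let E be a real inner product space, b ∈ E, H : E → E a continuous linear map that is symmetric (⟪H u, v⟫ = ⟪u, H v⟫ for all u, v), and γ > 0. Define the quadratic model m(s) = ⟪b, s⟫ + ½⟪H s, s⟫ for s ∈ E. Suppose e ∈ E satisfies ‖e‖ = 1, H e = λ•e for some λ < 0, and ⟪b, e⟫ ≤ 0. Then the step s = (γ·(−λ))•e satisfies ‖s‖ ≤ γ·(−λ) and −m(s) ≥ ½ γ² (−λ)³. -/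
/-- Let `E` be a real inner product space, `b ∈ E`, `H : E → E` a continuous linear
symmetric map, and `γ > 0`. With the quadratic model `m(s) = ⟪b, s⟫ + ½⟪H s, s⟫`, suppose `e ∈ E`
satisfies `‖e‖ = 1`, `H e = λ • e` for some `λ < 0`, and `⟪b, e⟫ ≤ 0`. Then the step
`s = (γ·(−λ)) • e` satisfies `‖s‖ ≤ γ·(−λ)` and `−m(s) ≥ ½ γ² (−λ)³`. -/
theorem stmt19 {E : Type*} [NormedAddCommGroup E] [InnerProductSpace ℝ E]
    (b : E) (H : E →L[ℝ] E)
    (hsym : ∀ u v : E, (inner ℝ (H u) v : ℝ) = (inner ℝ u (H v) : ℝ))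
    (γ : ℝ) (hγ : 0 < γ)
    (e : E) (he : ‖e‖ = 1) (lam : ℝ) (hlam : lam < 0) (heig : H e = lam • e)
    (hbe : (inner ℝ b e : ℝ) ≤ 0) :
    ‖(γ * -lam) • e‖ ≤ γ * -lam ∧
      1 / 2 * γ ^ 2 * (-lam) ^ 3 ≤
        -((inner ℝ b ((γ * -lam) • e) : ℝ) +
            1 / 2 * (inner ℝ (H ((γ * -lam) • e)) ((γ * -lam) • e) : ℝ)) := by
  have ht : 0 ≤ γ * -lam := by nlinarith
  have hee : (inner ℝ e e : ℝ) = 1 := by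
    rw [real_inner_self_eq_norm_sq, he]; norm_num
  constructor
  · rw [norm_smul, he]
    rw [Real.norm_eq_abs, abs_of_nonneg ht, mul_one]
  · have h1 : (inner ℝ b ((γ * -lam) • e) : ℝ) = (γ * -lam) * inner ℝ b e := by
      simp [real_inner_smul_right]
    have h2 : (inner ℝ (H ((γ * -lam) • e)) ((γ * -lam) • e) : ℝ)
        = (γ * -lam)^2 * lam := by
      rw [map_smul, heig]
      simp [real_inner_smul_left, real_inner_smul_right, hee, he]
      ring
    rw [h1, h2]
    nlinarith [mul_nonneg ht (neg_nonneg.mpr hbe)]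
end
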